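/- For any matrix $A = (a_{i,j}) \in M(m|n,r)$ obtained as $\jmath(\lambda,d,\mu)$ with $d \in \mathcal{D}^\circ_{\lambda\mu}$, the entries satisfy $a_{i,j} \in \{0,1\}$ whenever $i \le m < j$ or $j \le m < i$. -/

import Mathlib

open Finset Equiv

/-- Partial sum of the parts strictly before index `i`. -/
def psum {N : ℕ} (lam : Fin N → ℕ) (i : Fin N) : ℕ :=
  ∑ j ∈ Finset.univ.filter (fun j => j < i), lam j

/-- The block `R_i^λ` of a composition of `r`. -/
def Rblock {N r : ℕ} (lam : Fin N → ℕ) (i : Fin N) : Finset (Fin r) :=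
  Finset.univ.filter (fun x : Fin r => psum lam i ≤ (x : ℕ) ∧ (x : ℕ) < psum lam i + lam i)

lemma Rblock_disj {N r : ℕ} (lam : Fin N → ℕ) {i i' : Fin N} {x : Fin r}
    (h : x ∈ Rblock lam i) (h' : x ∈ Rblock lam i') : i = i' := by
  simp only [Rblock, Finset.mem_filter] at h h'
  by_contra hne
  rcases lt_or_gt_of_ne hne with hlt | hlt
  · have : psum lam i + lam i ≤ psum lam i' := by
      have hsub : insert i (Finset.univ.filter (fun j => j < i)) ⊆
          Finset.univ.filter (fun j => j < i') := by
        intro j hj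
        simp only [Finset.mem_insert, Finset.mem_filter, Finset.mem_univ, true_and] at hj ⊢
        rcases hj with rfl | hj
        · exact hlt
        · exact hj.trans hlt
      have := Finset.sum_le_sum_of_subset (f := lam) hsub
      rw [Finset.sum_insert (by simp)] at this
      simpa [psum, add_comm] using this
    omega
  · have : psum lam i' + lam i' ≤ psum lam i := by
      have hsub : insert i' (Finset.univ.filter (fun j => j < i')) ⊆
          Finset.univ.filter (fun j => j < i) := by
        intro j hj
        simp only [Finset.mem_insert, Finset.mem_filter, Finset.mem_univ, true_and] at hj ⊢
        rcases hj with rfl | hj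
        · exact hlt
        · exact hj.trans hlt
      have := Finset.sum_le_sum_of_subset (f := lam) hsub
      rw [Finset.sum_insert (by simp)] at this
      simpa [psum, add_comm] using this
    omega

lemma swap_block {N r : ℕ} (lam : Fin N → ℕ) {i : Fin N} {a b : Fin r}
    (ha : a ∈ Rblock lam i) (hb : b ∈ Rblock lam i) :
    (∀ i' : Fin N, ∀ x ∈ Rblock (r := r) lam i', Equiv.swap a b x ∈ Rblock lam i') ∧
    (∀ i' : Fin N, i' ≠ i → ∀ x ∈ Rblock (r := r) lam i', Equiv.swap a b x = x) := by
  constructor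
  · intro i' x hx
    rcases eq_or_ne x a with rfl | hxa
    · rw [Equiv.swap_apply_left]; rwa [Rblock_disj lam ha hx] at hb
    rcases eq_or_ne x b with rfl | hxb
    · rw [Equiv.swap_apply_right]; rwa [Rblock_disj lam hb hx] at ha
    · rwa [Equiv.swap_apply_of_ne_of_ne hxa hxb]
  · intro i' hi' x hx
    have hxa : x ≠ a := fun h => hi' (Rblock_disj lam (h ▸ hx) ha)
    have hxb : x ≠ b := fun h => hi' (Rblock_disj lam (h ▸ hx) hb)
    exact Equiv.swap_apply_of_ne_of_ne hxa hxb

/-- Membership in the parabolic subgroup `𝔖_λ`. -/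
def inParab {N r : ℕ} (lam : Fin N → ℕ) (w : Perm (Fin r)) : Prop :=
  ∀ i : Fin N, ∀ x ∈ Rblock (r := r) lam i, w x ∈ Rblock (r := r) lam i

/-- Membership in the even parabolic `𝔖_{λ^{(0)}} = 𝔖_{(λ^{(0)}|1^{r_1})}`. -/
def inParabEven {m n r : ℕ} (lam : Fin (m + n) → ℕ) (w : Perm (Fin r)) : Prop :=
  (∀ i : Fin (m + n), (i : ℕ) < m → ∀ x ∈ Rblock (r := r) lam i, w x ∈ Rblock (r := r) lam i) ∧
  (∀ i : Fin (m + n), m ≤ (i : ℕ) → ∀ x ∈ Rblock (r := r) lam i, w x = x)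

/-- Membership in the odd parabolic `𝔖_{λ^{(1)}} = 𝔖_{(1^{r_0}|λ^{(1)})}`. -/
def inParabOdd {m n r : ℕ} (lam : Fin (m + n) → ℕ) (w : Perm (Fin r)) : Prop :=
  (∀ i : Fin (m + n), m ≤ (i : ℕ) → ∀ x ∈ Rblock (r := r) lam i, w x ∈ Rblock (r := r) lam i) ∧
  (∀ i : Fin (m + n), (i : ℕ) < m → ∀ x ∈ Rblock (r := r) lam i, w x = x)

/-- Length (number of inversions) of a permutation. -/
def len {r : ℕ} (w : Perm (Fin r)) : ℕ :=
  (Finset.univ.filter (fun p : Fin r × Fin r => p.1 < p.2 ∧ w p.2 < w p.1)).card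

/-- `d` is the shortest representative of the double coset `𝔖_λ d 𝔖_μ`. -/
def isDistinguished {N r : ℕ} (lam mu : Fin N → ℕ) (d : Perm (Fin r)) : Prop :=
  ∀ u v : Perm (Fin r), inParab (r := r) lam u → inParab (r := r) mu v →
    len d ≤ len (u * d * v)

/-- The matrix `ȷ(λ,d,μ)` with `a_{i,j} = |R_i^λ ∩ d(R_j^μ)|`. -/
def jmath {N r : ℕ} (lam mu : Fin N → ℕ) (d : Perm (Fin r)) :
    Matrix (Fin N) (Fin N) ℕ :=
  fun i j => ((Rblock (r := r) lam i) ∩ (Rblock (r := r) mu j).image d).card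

/-- for `d ∈ 𝒟°_{λμ}` (a distinguished representative such that
`𝔖^d_{λ^{(0)}} ∩ 𝔖_{μ^{(1)}} = 1` and `𝔖^d_{λ^{(1)}} ∩ 𝔖_{μ^{(0)}} = 1`), the matrix
`A = ȷ(λ,d,μ)` has entries `a_{i,j} ∈ {0,1}` whenever `i ≤ m < j` or `j ≤ m < i`. -/
theorem mixed_entries_le_one (m n r : ℕ) (lam mu : Fin (m + n) → ℕ)
    (hlam : ∑ i, lam i = r) (hmu : ∑ i, mu i = r) (d : Perm (Fin r))
    (hd : isDistinguished lam mu d)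
    (hcirc1 : ∀ w : Perm (Fin r),
      inParabEven (m := m) (n := n) lam (d * w * d⁻¹) →
      inParabOdd (m := m) (n := n) mu w → w = 1)
    (hcirc2 : ∀ w : Perm (Fin r),
      inParabOdd (m := m) (n := n) lam (d * w * d⁻¹) →
      inParabEven (m := m) (n := n) mu w → w = 1) :
    ∀ i j : Fin (m + n),
      (((i : ℕ) < m ∧ m ≤ (j : ℕ)) ∨ ((j : ℕ) < m ∧ m ≤ (i : ℕ))) →
      jmath (r := r) lam mu d i j ≤ 1 := by
  intro i j hij
  by_contra hcard
  push_neg at hcard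
  obtain ⟨x, hx, y, hy, hxy⟩ := Finset.one_lt_card.mp hcard
  simp only [jmath, Finset.mem_inter, Finset.mem_image] at hx hy
  obtain ⟨hxl, x', hx'm, rfl⟩ := hx
  obtain ⟨hyl, y', hy'm, rfl⟩ := hy
  have hx'y' : x' ≠ y' := fun h => hxy (by rw [h])
  have hconj : d * Equiv.swap x' y' * d⁻¹ = Equiv.swap (d x') (d y') :=
    (Equiv.swap_apply_apply d x' y').symm
  have hlamb := swap_block lam hxl hyl
  have hmub := swap_block mu hx'm hy'm
  rcases hij with ⟨hi, hj⟩ | ⟨hj, hi⟩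
  · refine hx'y' (Equiv.swap_eq_one_iff.mp (hcirc1 (Equiv.swap x' y') ?_ ?_))
    · rw [hconj]
      exact ⟨fun i' _ => hlamb.1 i',
        fun i' hi' => hlamb.2 i' (fun h => absurd hi (by subst h; omega))⟩
    · exact ⟨fun j' _ => hmub.1 j',
        fun j' hj' => hmub.2 j' (fun h => absurd hj (by subst h; omega))⟩
  · refine hx'y' (Equiv.swap_eq_one_iff.mp (hcirc2 (Equiv.swap x' y') ?_ ?_))
    · rw [hconj]
      exact ⟨fun i' _ => hlamb.1 i',
        fun i' hi' => hlamb.2 i' (fun h => absurd hi (by subst h; omega))⟩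
    · exact ⟨fun j' _ => hmub.1 j',
        fun j' hj' => hmub.2 j' (fun h => absurd hj (by subst h; omega))⟩
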